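/- arXiv:1512.05709 — 7 statements merged into one kernel-verified Lean document; each statement's English description precedes it below -/
import Mathlib

section
/- Let α₁,…,αᵣ be nonzero complex numbers. Then there exists L with 1 ≤ L ≤ r such that ∑ᵢ αᵢ^L ≠ 0. -/
theorem exists_nonzero_power_sum (r : ℕ) (hr : 0 < r) (α : Fin r → ℂ)
    (hα : ∀ i, α i ≠ 0) :
    ∃ L : ℕ, 1 ≤ L ∧ L ≤ r ∧ ∑ i, α i ^ L ≠ 0 := by
  classical
  by_contra h
  push_neg at h
  set s : Finset ℂ := Finset.univ.image α with hs
  set n := s.card with hn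
  have hn_le : n ≤ r := by
    simpa using Finset.card_image_le (s := (Finset.univ : Finset (Fin r))) (f := α)
  let e := s.equivFin
  let v : Fin n → ℂ := fun j => (e.symm j : ℂ)
  have hv_inj : Function.Injective v := by
    intro a b hab
    exact e.symm.injective (Subtype.ext hab)
  have hv_mem : ∀ j, v j ∈ s := fun j => (e.symm j).2
  have hv_ne : ∀ j, v j ≠ 0 := by
    intro j
    obtain ⟨i, _, hi⟩ := Finset.mem_image.1 (hv_mem j)
    rw [← hi]; exact hα i
  let m : Fin n → ℂ := fun j => (Finset.univ.filter (fun i => α i = v j)).card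
  have key : ∀ L : ℕ, ∑ i, α i ^ L = ∑ j, m j * v j ^ L := by
    intro L
    rw [Finset.sum_comp (fun b : ℂ => b ^ L) α]
    rw [← Finset.sum_attach s (fun b => (Finset.univ.filter (fun i => α i = b)).card • b ^ L)]
    rw [Finset.attach_eq_univ]
    refine Fintype.sum_equiv e _ _ fun x => ?_
    simp [m, v, nsmul_eq_mul]
  let M : Matrix (Fin n) (Fin n) ℂ := fun L j => v j ^ ((L : ℕ) + 1)
  have hMv : M.mulVec m = 0 := by
    funext L
    have h1 : (1 : ℕ) ≤ (L : ℕ) + 1 := Nat.le_add_left 1 _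
    have h2 : (L : ℕ) + 1 ≤ r := le_trans (Nat.succ_le_of_lt L.2) hn_le
    have := h ((L : ℕ) + 1) h1 h2
    rw [key] at this
    simpa [M, Matrix.mulVec, dotProduct, mul_comm] using this
  have hdet : M.det ≠ 0 := by
    have hM : M = Matrix.transpose (Matrix.vandermonde v) * Matrix.diagonal v := by
      funext L j
      simp [M, Matrix.mul_apply, Matrix.diagonal, Matrix.vandermonde, pow_succ]
    rw [hM, Matrix.det_mul, Matrix.det_transpose, Matrix.det_diagonal]
    exact mul_ne_zero (Matrix.det_vandermonde_ne_zero_iff.2 hv_inj)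
      (Finset.prod_ne_zero_iff.2 fun j _ => hv_ne j)
  have hm0 : m = 0 := Matrix.eq_zero_of_mulVec_eq_zero hdet hMv
  -- but each m j is a positive natural number cast
  have hn_pos : 0 < n := by
    rw [hn]
    refine Finset.card_pos.2 ?_
    have : Nonempty (Fin r) := ⟨⟨0, hr⟩⟩
    exact Finset.univ_nonempty.image α
  let j : Fin n := ⟨0, hn_pos⟩
  obtain ⟨i, _, hi⟩ := Finset.mem_image.1 (hv_mem j)
  have : m j ≠ 0 := by
    have : i ∈ Finset.univ.filter (fun i => α i = v j) := by simp [hi]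
    have hcard : 0 < (Finset.univ.filter (fun i => α i = v j)).card :=
      Finset.card_pos.2 ⟨i, this⟩
    simp only [m]
    exact_mod_cast Nat.cast_ne_zero.2 hcard.ne'
  rw [hm0] at this
  exact this rfl
end

section
/- Let α₁,…,αᵣ ∈ ℂ∖{0} and suppose that for every L ∈ ℕ with 1 ≤ L ≤ r we have ∑ᵢ αᵢ^L = 0. Then r = 0, i.e., the list is empty. -/
theorem all_power_sums_zero_implies_empty (r : ℕ) (α : Fin r → ℂ)
    (hα : ∀ i, α i ≠ 0)
    (h : ∀ L : ℕ, 1 ≤ L → L ≤ r → ∑ i, α i ^ L = 0) :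
    r = 0 := by
  by_contra hr
  have hnewton := congrArg (MvPolynomial.aeval α)
    (MvPolynomial.mul_esymm_eq_sum (Fin r) ℂ r)
  simp only [map_mul, map_sum, map_pow, map_natCast, map_neg, map_one] at hnewton
  -- each summand vanishes since psum exponent is between 1 and r
  have hz : (r : ℂ) * MvPolynomial.aeval α (MvPolynomial.esymm (Fin r) ℂ r) = 0 := by
    rw [hnewton, Finset.sum_eq_zero, mul_zero]
    intro a ha
    simp only [Finset.mem_filter, Finset.HasAntidiagonal.mem_antidiagonal] at ha
    have h1 : 1 ≤ a.2 := by omega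
    have h2 : a.2 ≤ r := by omega
    have : MvPolynomial.aeval α (MvPolynomial.psum (Fin r) ℂ a.2) = 0 := by
      simp [MvPolynomial.psum, h a.2 h1 h2]
    simp [this]
  have hrc : (r : ℂ) ≠ 0 := Nat.cast_ne_zero.mpr hr
  have he : MvPolynomial.aeval α (MvPolynomial.esymm (Fin r) ℂ r) = 0 :=
    (mul_eq_zero.mp hz).resolve_left hrc
  have hesymm : MvPolynomial.aeval α (MvPolynomial.esymm (Fin r) ℂ r) = ∏ i, α i := by
    rw [MvPolynomial.esymm]
    have hcard : (Finset.univ : Finset (Fin r)).card = r := by simp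
    have : Finset.powersetCard r (Finset.univ : Finset (Fin r)) = {Finset.univ} := by
      simpa [hcard] using Finset.powersetCard_self (Finset.univ : Finset (Fin r))
    simp [this]
  rw [hesymm] at he
  exact (Finset.prod_ne_zero_iff.mpr (fun i _ => hα i)) he
end

section
/- If Y₁,…,Y_L are real d×d matrices simultaneously upper-triangularizable over ℝ, and P = (1/2)(I + F) is the projector onto the symmetric subspace of ℂ^d ⊗ ℂ^d, then tr(P(Y₁⊗Y₁)P(Y₂⊗Y₂)P ⋯ P(Y_L⊗Y_L)P) ≥ 0. -/
open Matrix Kronecker ComplexOrder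

section Aux
variable {n : Type*} [Fintype n] [DecidableEq n]

lemma aux_prod_comm (P : Matrix n n ℂ) (hP : P * P = P) :
    ∀ l : List (Matrix n n ℂ), (∀ A ∈ l, P * A = A * P) →
      P * (l.map (· * P)).prod = l.prod * P := by
  intro l
  induction l with
  | nil => simp
  | cons a l ih =>
    intro h
    have ha := h a (by simp)
    have h' : ∀ A ∈ l, P * A = A * P := fun A hA => h A (by simp [hA])
    simp only [List.map_cons, List.prod_cons]
    calc P * (a * P * (l.map (· * P)).prod)
        = (P * a) * (P * (l.map (· * P)).prod) := by noncomm_ring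
      _ = a * ((P * P) * (l.map (· * P)).prod) := by rw [ha]; noncomm_ring
      _ = a * (P * (l.map (· * P)).prod) := by rw [hP]
      _ = a * (l.prod * P) := by rw [ih h']
      _ = a * l.prod * P := by noncomm_ring

lemma aux_kron_prod : ∀ l : List (Matrix n n ℂ),
    (l.map fun A => A ⊗ₖ A).prod = l.prod ⊗ₖ l.prod := by
  intro l
  induction l with
  | nil => simp [Matrix.one_kronecker_one]
  | cons a l ih => simp [ih, Matrix.mul_kronecker_mul]

lemma aux_conj_prod (Q : Matrix n n ℝ) (h1 : Q⁻¹ * Q = 1) (h2 : Q * Q⁻¹ = 1) :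
    ∀ l : List (Matrix n n ℝ),
      Q * l.prod * Q⁻¹ = (l.map fun A => Q * A * Q⁻¹).prod := by
  intro l
  induction l with
  | nil => simpa using h2
  | cons a l ih =>
    simp only [List.map_cons, List.prod_cons]
    rw [← ih, show Q * a * Q⁻¹ * (Q * l.prod * Q⁻¹) = Q * a * (Q⁻¹ * Q) * l.prod * Q⁻¹ by
      noncomm_ring, h1]
    noncomm_ring

lemma aux_tri_prod {n : Type*} [Fintype n] [DecidableEq n] [LinearOrder n] :
    ∀ l : List (Matrix n n ℝ), (∀ A ∈ l, A.BlockTriangular id) →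
      l.prod.BlockTriangular id := by
  intro l
  induction l with
  | nil => intro _; exact Matrix.blockTriangular_one
  | cons a l ih =>
    intro h
    simp only [List.prod_cons]
    exact (h a (by simp)).mul (ih fun A hA => h A (by simp [hA]))
end Aux

theorem trace_projected_nonneg_of_triangularizable (d L : ℕ)
    (Y : Fin L → Matrix (Fin d) (Fin d) ℝ)
    (hQ : ∃ Q : Matrix (Fin d) (Fin d) ℝ, IsUnit Q ∧
      ∀ i, (Q * Y i * Q⁻¹).BlockTriangular id) :
    let F : Matrix (Fin d × Fin d) (Fin d × Fin d) ℂ :=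
      fun p q => if p.1 = q.2 ∧ p.2 = q.1 then 1 else 0
    let P : Matrix (Fin d × Fin d) (Fin d × Fin d) ℂ := (1 / 2 : ℂ) • (1 + F)
    let Yc : Fin L → Matrix (Fin d) (Fin d) ℂ := fun i => (Y i).map Complex.ofReal
    0 ≤ (P * (List.ofFn fun i => (Yc i ⊗ₖ Yc i) * P).prod).trace := by
  intro F P Yc
  obtain ⟨Q, hQu, hT⟩ := hQ
  have hFdef : F = fun p q => if p.1 = q.2 ∧ p.2 = q.1 then (1:ℂ) else 0 := rfl
  have hPdef : P = (1 / 2 : ℂ) • (1 + F) := rfl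
  have hYc : Yc = fun i => (Y i).map Complex.ofReal := rfl
  -- pointwise multiplication by F
  have hFmul : ∀ (X : Matrix (Fin d × Fin d) (Fin d × Fin d) ℂ) p q,
      (F * X) p q = X (p.2, p.1) q := by
    intro X p q
    rw [Matrix.mul_apply, Finset.sum_eq_single ((p.2 : Fin d), (p.1 : Fin d))]
    · rw [hFdef]; simp
    · intro r _ hr
      rw [hFdef]
      simp only
      rw [if_neg, zero_mul]
      rintro ⟨h1, h2⟩
      exact hr (Prod.ext h2.symm h1.symm)
    · intro h; exact absurd (Finset.mem_univ _) h
  have hmulF : ∀ (X : Matrix (Fin d × Fin d) (Fin d × Fin d) ℂ) p q,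
      (X * F) p q = X p (q.2, q.1) := by
    intro X p q
    rw [Matrix.mul_apply, Finset.sum_eq_single ((q.2 : Fin d), (q.1 : Fin d))]
    · rw [hFdef]; simp
    · intro r _ hr
      rw [hFdef]
      simp only
      rw [if_neg, mul_zero]
      rintro ⟨h1, h2⟩
      exact hr (Prod.ext h1 h2)
    · intro h; exact absurd (Finset.mem_univ _) h
  have hFF : F * F = 1 := by
    ext p q
    rw [hFmul, hFdef]
    simp [Matrix.one_apply, Prod.ext_iff, and_comm]
  have hFA : ∀ A : Matrix (Fin d) (Fin d) ℂ, F * (A ⊗ₖ A) = (A ⊗ₖ A) * F := by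
    intro A
    ext p q
    rw [hFmul, hmulF]
    simp only [Matrix.kroneckerMap_apply]
    ring
  have hPA : ∀ A : Matrix (Fin d) (Fin d) ℂ, P * (A ⊗ₖ A) = (A ⊗ₖ A) * P := by
    intro A
    rw [hPdef, Matrix.smul_mul, Matrix.mul_smul, add_mul, mul_add, Matrix.one_mul,
      Matrix.mul_one, hFA]
  have hPP : P * P = P := by
    have e : (1 + F) * (1 + F) = (2:ℂ) • (1 + F) := by
      rw [mul_add, mul_one, add_mul, one_mul, hFF, two_smul]
      abel
    rw [hPdef, Matrix.smul_mul, Matrix.mul_smul, e, smul_smul, smul_smul]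
    norm_num
  -- collapse the product
  set M : Matrix (Fin d) (Fin d) ℂ := (List.ofFn Yc).prod with hM
  have hlist : (List.ofFn fun i => (Yc i ⊗ₖ Yc i) * P)
      = ((List.ofFn Yc).map fun A => A ⊗ₖ A).map (· * P) := by
    rw [List.map_map, List.map_ofFn]
    rfl
  have key : P * (List.ofFn fun i => (Yc i ⊗ₖ Yc i) * P).prod = (M ⊗ₖ M) * P := by
    rw [hlist, aux_prod_comm P hPP _ ?_, aux_kron_prod]
    intro A hA
    simp only [List.mem_map] at hA
    obtain ⟨B, _, rfl⟩ := hA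
    exact hPA B
  rw [key]
  -- compute the trace
  have hMF : ((M ⊗ₖ M) * F).trace = (M * M).trace := by
    simp only [Matrix.trace, Matrix.diag, Matrix.mul_apply, hmulF,
      Matrix.kroneckerMap_apply, Fintype.sum_prod_type]
  have htr : ((M ⊗ₖ M) * P).trace = (1/2 : ℂ) * (M.trace * M.trace + (M * M).trace) := by
    rw [show (M ⊗ₖ M) * P = (1/2 : ℂ) • ((M ⊗ₖ M) + (M ⊗ₖ M) * F) by
      rw [hPdef, Matrix.mul_smul, mul_add, Matrix.mul_one]]
    rw [Matrix.trace_smul, Matrix.trace_add, Matrix.trace_kronecker, hMF, smul_eq_mul]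
  rw [htr]
  -- pass to the real matrices
  set N : Matrix (Fin d) (Fin d) ℝ := (List.ofFn Y).prod with hN
  have hMN : M = N.map Complex.ofReal := by
    have e : (List.ofFn Yc) = (List.ofFn Y).map ((algebraMap ℝ ℂ).mapMatrix) := by
      rw [List.map_ofFn]
      rfl
    rw [hM, e, ← map_list_prod ((algebraMap ℝ ℂ).mapMatrix : Matrix (Fin d) (Fin d) ℝ →+* _)]
    rfl
  have htrM : M.trace = (N.trace : ℂ) := by
    rw [hMN]; simp [Matrix.trace, Matrix.diag]
  have htrM2 : (M * M).trace = ((N * N).trace : ℂ) := by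
    rw [hMN]
    simp [Matrix.trace, Matrix.diag, Matrix.mul_apply]
  rw [htrM, htrM2]
  -- the real inequality
  have hQd : IsUnit Q.det := (Matrix.isUnit_iff_isUnit_det Q).mp hQu
  have h1 : Q⁻¹ * Q = 1 := Matrix.nonsing_inv_mul Q hQd
  have h2 : Q * Q⁻¹ = 1 := Matrix.mul_nonsing_inv Q hQd
  set T : Matrix (Fin d) (Fin d) ℝ := Q * N * Q⁻¹ with hTdef
  have hTtri : T.BlockTriangular id := by
    rw [hTdef, hN, aux_conj_prod Q h1 h2]
    apply aux_tri_prod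
    intro A hA
    simp only [List.map_ofFn, List.mem_ofFn, Function.comp] at hA
    obtain ⟨i, rfl⟩ := hA
    exact hT i
  have h3 : T.trace = N.trace := by
    rw [hTdef, Matrix.trace_mul_comm, ← Matrix.mul_assoc, h1, Matrix.one_mul]
  have h4 : (T * T).trace = (N * N).trace := by
    have e : T * T = Q * (N * N) * Q⁻¹ := by
      rw [hTdef, show Q * N * Q⁻¹ * (Q * N * Q⁻¹) = Q * N * (Q⁻¹ * Q) * N * Q⁻¹ by
        noncomm_ring, h1]
      noncomm_ring
    rw [e, Matrix.trace_mul_comm, ← Matrix.mul_assoc, h1, Matrix.one_mul]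
  have h5 : (T * T).trace = ∑ i, T i i * T i i := by
    simp only [Matrix.trace, Matrix.diag, Matrix.mul_apply]
    apply Finset.sum_congr rfl
    intro i _
    rw [Finset.sum_eq_single i]
    · intro j _ hji
      rcases lt_or_gt_of_ne hji with hlt | hgt
      · rw [hTtri (show id j < id i from hlt), zero_mul]
      · rw [hTtri (show id i < id j from hgt), mul_zero]
    · intro h; exact absurd (Finset.mem_univ i) h
  have hreal : 0 ≤ N.trace * N.trace + (N * N).trace := by
    rw [← h3, ← h4, h5]
    exact add_nonneg (mul_self_nonneg _)
      (Finset.sum_nonneg fun i _ => mul_self_nonneg _)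
  rw [show (1/2 : ℂ) * ((N.trace : ℂ) * N.trace + ((N*N).trace : ℂ))
      = ((1/2 * (N.trace * N.trace + (N*N).trace) : ℝ) : ℂ) by push_cast; ring]
  rw [Complex.zero_le_real]
  linarith
end

section
/- Let (μᵢ)_{i≤r}, (ν_j)_{j≤s} and (μ'ₖ)_{k≤r'}, (ν'ₗ)_{l≤s'} be tuples of complex numbers with ∑ᵢ μᵢ^L · ∑ₗ ν'ₗ^L = ∑ⱼ νⱼ^L · ∑ₖ μ'ₖ^L for all L = 1,…,N where N ≥ max(r·s', s·r'). Then the same identity holds for all L ∈ ℕ, L ≥ 1. -/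
open Finset Polynomial

/-- Evaluated Newton identity over ℂ. -/
lemma newton_eval {n : ℕ} (f : Fin n → ℂ) (k : ℕ) :
    (k : ℂ) * (Finset.univ.val.map f).esymm k = (-1) ^ (k + 1) *
      ∑ p ∈ (Finset.HasAntidiagonal.antidiagonal k).filter (fun p => p.1 < k),
        (-1) ^ p.1 * (Finset.univ.val.map f).esymm p.1 * (∑ i, f i ^ p.2) := by
  have := congrArg (MvPolynomial.aeval f) (MvPolynomial.mul_esymm_eq_sum (Fin n) ℂ k)
  simpa [map_sum, map_mul, map_pow, MvPolynomial.aeval_esymm_eq_multiset_esymm,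
    MvPolynomial.psum] using this

lemma multiset_eq_of_psum_eq (n : ℕ) (a b : Fin n → ℂ)
    (h : ∀ k, 1 ≤ k → k ≤ n → ∑ i, a i ^ k = ∑ i, b i ^ k) :
    Finset.univ.val.map a = Finset.univ.val.map b := by
  have hesymm : ∀ k, k ≤ n →
      (Finset.univ.val.map a).esymm k = (Finset.univ.val.map b).esymm k := by
    intro k
    induction k using Nat.strong_induction_on with
    | _ k ih =>
      intro hk
      rcases Nat.eq_zero_or_pos k with h0 | hpos
      · subst h0; simp [Multiset.esymm]
      · have ha := newton_eval a k
        have hb := newton_eval b k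
        have hsum : ∑ p ∈ (Finset.HasAntidiagonal.antidiagonal k).filter (fun p => p.1 < k),
              (-1 : ℂ) ^ p.1 * (Finset.univ.val.map a).esymm p.1 * (∑ i, a i ^ p.2)
            = ∑ p ∈ (Finset.HasAntidiagonal.antidiagonal k).filter (fun p => p.1 < k),
              (-1 : ℂ) ^ p.1 * (Finset.univ.val.map b).esymm p.1 * (∑ i, b i ^ p.2) := by
          refine Finset.sum_congr rfl ?_
          intro p hp
          simp only [Finset.mem_filter, Finset.HasAntidiagonal.mem_antidiagonal] at hp
          rw [ih p.1 (by omega) (by omega), h p.2 (by omega) (by omega)]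
        have hk0 : (k : ℂ) ≠ 0 := Nat.cast_ne_zero.mpr (by omega)
        rw [hsum] at ha
        exact mul_left_cancel₀ hk0 (ha.trans hb.symm)
  have hcard : ∀ f : Fin n → ℂ, Multiset.card (Finset.univ.val.map f) = n := by
    intro f; simp
  have hprod : ((Finset.univ.val.map a).map fun r => X + C r).prod
      = ((Finset.univ.val.map b).map fun r => X + C r).prod := by
    rw [Multiset.prod_X_add_C_eq_sum_esymm, Multiset.prod_X_add_C_eq_sum_esymm,
      hcard a, hcard b]
    refine Finset.sum_congr rfl fun j hj => ?_
    rw [hesymm j (Nat.lt_succ_iff.mp (Finset.mem_range.mp hj))]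
  have hneg : ∀ f : Fin n → ℂ, ((Finset.univ.val.map f).map fun r => X + C r).prod
      = (((Finset.univ.val.map f).map Neg.neg).map fun r => X - C r).prod := by
    intro f
    simp [Multiset.map_map, Function.comp_def, sub_neg_eq_add]
  rw [hneg a, hneg b] at hprod
  have h2 := congrArg Polynomial.roots hprod
  rw [Polynomial.roots_multiset_prod_X_sub_C, Polynomial.roots_multiset_prod_X_sub_C] at h2
  have h3 := congrArg (Multiset.map Neg.neg) h2
  simpa [Multiset.map_map, Function.comp_def] using h3

lemma psum_all_of_multiset_eq {n : ℕ} {a b : Fin n → ℂ}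
    (h : Finset.univ.val.map a = Finset.univ.val.map b) (k : ℕ) :
    ∑ i, a i ^ k = ∑ i, b i ^ k := by
  have : ((Finset.univ.val.map a).map (· ^ k)).sum
      = ((Finset.univ.val.map b).map (· ^ k)).sum := by rw [h]
  simpa [Multiset.map_map, Finset.sum, Function.comp_def] using this

lemma pad_sum (m n : ℕ) (hmn : m ≤ n) (g : Fin m → ℂ) (L : ℕ) (hL : 1 ≤ L) :
    ∑ i : Fin n, (if h : (i : ℕ) < m then g ⟨i, h⟩ else 0) ^ L = ∑ i, g i ^ L := by
  have step1 : ∑ i : Fin n, (if h : (i : ℕ) < m then g ⟨i, h⟩ else 0) ^ L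
      = ∑ i ∈ Finset.range m, (if h : i < m then g ⟨i, h⟩ else (0:ℂ)) ^ L := by
    rw [Fin.sum_univ_eq_sum_range (fun j => (if h : j < m then g ⟨j, h⟩ else (0:ℂ)) ^ L) n]
    refine (Finset.sum_subset (Finset.range_subset_range.mpr hmn) ?_).symm
    intro i _ hi
    have hm : ¬ i < m := by simpa using hi
    simp [hm, zero_pow (by omega : L ≠ 0)]
  rw [step1, Finset.sum_range (fun j => _)]
  refine Finset.sum_congr rfl fun i _ => ?_
  simp

theorem cross_power_sum_identity_extends (r s r' s' N : ℕ)
    (μ : Fin r → ℂ) (ν : Fin s → ℂ) (μ' : Fin r' → ℂ) (ν' : Fin s' → ℂ)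
    (hN : max (r * s') (s * r') ≤ N)
    (h : ∀ L : ℕ, 1 ≤ L → L ≤ N →
      (∑ i, μ i ^ L) * (∑ l, ν' l ^ L) = (∑ j, ν j ^ L) * (∑ k, μ' k ^ L)) :
    ∀ L : ℕ, 1 ≤ L →
      (∑ i, μ i ^ L) * (∑ l, ν' l ^ L) = (∑ j, ν j ^ L) * (∑ k, μ' k ^ L) := by
  have h1 : r * s' ≤ N := le_trans (le_max_left _ _) hN
  have h2 : s * r' ≤ N := le_trans (le_max_right _ _) hN
  set g1 : Fin (r * s') → ℂ := fun i => μ (finProdFinEquiv.symm i).1 * ν' (finProdFinEquiv.symm i).2 with hg1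
  set g2 : Fin (s * r') → ℂ := fun i => ν (finProdFinEquiv.symm i).1 * μ' (finProdFinEquiv.symm i).2 with hg2
  have hs1 : ∀ L : ℕ, ∑ i, g1 i ^ L = (∑ i, μ i ^ L) * (∑ l, ν' l ^ L) := by
    intro L
    calc ∑ i, g1 i ^ L = ∑ p : Fin r × Fin s', (μ p.1 * ν' p.2) ^ L :=
          Equiv.sum_comp finProdFinEquiv.symm (fun p : Fin r × Fin s' => (μ p.1 * ν' p.2) ^ L)
      _ = (∑ i, μ i ^ L) * (∑ l, ν' l ^ L) := by
          simp only [Fintype.sum_prod_type, mul_pow, Finset.sum_mul, Finset.mul_sum]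
          exact Finset.sum_comm
  have hs2 : ∀ L : ℕ, ∑ i, g2 i ^ L = (∑ j, ν j ^ L) * (∑ k, μ' k ^ L) := by
    intro L
    calc ∑ i, g2 i ^ L = ∑ p : Fin s × Fin r', (ν p.1 * μ' p.2) ^ L :=
          Equiv.sum_comp finProdFinEquiv.symm (fun p : Fin s × Fin r' => (ν p.1 * μ' p.2) ^ L)
      _ = (∑ j, ν j ^ L) * (∑ k, μ' k ^ L) := by
          simp only [Fintype.sum_prod_type, mul_pow, Finset.sum_mul, Finset.mul_sum]
          exact Finset.sum_comm
  set a : Fin N → ℂ := fun i => if hi : (i : ℕ) < r * s' then g1 ⟨i, hi⟩ else 0 with ha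
  set b : Fin N → ℂ := fun i => if hi : (i : ℕ) < s * r' then g2 ⟨i, hi⟩ else 0 with hb
  have hmeq : Finset.univ.val.map a = Finset.univ.val.map b := by
    apply multiset_eq_of_psum_eq
    intro k hk1 hkN
    simp only [ha, hb]
    rw [pad_sum _ _ h1 g1 k hk1, pad_sum _ _ h2 g2 k hk1, hs1, hs2]
    exact h k hk1 hkN
  intro L hL
  have key : ∑ i, a i ^ L = ∑ i, b i ^ L := psum_all_of_multiset_eq hmeq L
  simp only [ha, hb] at key
  rw [pad_sum _ _ h1 g1 L hL, pad_sum _ _ h2 g2 L hL, hs1, hs2] at key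
  exact key
end

section
/- Let Y₁,…,Y₅ be d×d integer matrices and define, for i = 1,…,5, Aᵢ = O P (Yᵢ ⊗ Yᵢ) P O† ⊕ |e⟩⟨e| (a block matrix with a 1×1 block equal to 1), A₆ = (|0,0⟩⟨0,0| compressed by O) ⊕ 1, A₇ = (|0,0⟩⟨0,0| compressed by O) ⊕ (−1), where P is the symmetric projector on ℂ^d ⊗ ℂ^d and O an isometry with O†O = P, OO† = I. Then for any word j₁,…,j_m ∈ {1,…,5}, tr(A_{j₁}⋯A_{j_m} A₇) = (⟨0|Y_{j₁}⋯Y_{j_m}|0⟩)² − 1. -/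
open Matrix Kronecker

section Aux

variable {d : ℕ} [NeZero d]

private def Fswap (d : ℕ) : Matrix (Fin d × Fin d) (Fin d × Fin d) ℂ :=
  fun p q => if p.1 = q.2 ∧ p.2 = q.1 then 1 else 0

private lemma Fswap_apply (p q : Fin d × Fin d) :
    Fswap d p q = if q = (p.2, p.1) then 1 else 0 := by
  unfold Fswap
  congr 1
  simp [Prod.ext_iff, and_comm, eq_comm]

private lemma Fswap_mul (M : Matrix (Fin d × Fin d) (Fin d × Fin d) ℂ) (p q : Fin d × Fin d) :
    (Fswap d * M) p q = M (p.2, p.1) q := by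
  simp only [Matrix.mul_apply, Fswap_apply]
  rw [Finset.sum_eq_single (p.2, p.1)]
  · simp
  · intro b _ hb; simp [hb]
  · simp

private lemma mul_Fswap (M : Matrix (Fin d × Fin d) (Fin d × Fin d) ℂ) (p q : Fin d × Fin d) :
    (M * Fswap d) p q = M p (q.2, q.1) := by
  simp only [Matrix.mul_apply, Fswap_apply]
  rw [Finset.sum_eq_single (q.2, q.1)]
  · simp [Prod.ext_iff, eq_comm, and_comm]
  · intro b _ hb
    have : ¬ q = (b.2, b.1) := by
      rintro rfl; exact hb rfl
    simp [this]
  · intro h; exact absurd (Finset.mem_univ _) h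

private lemma Fswap_mul_Fswap : Fswap d * Fswap d = 1 := by
  ext p q
  rw [Fswap_mul, Fswap_apply]
  simp [Matrix.one_apply, Prod.ext_iff, and_comm, eq_comm]

private lemma Fswap_kron (A B : Matrix (Fin d) (Fin d) ℂ) :
    Fswap d * (A ⊗ₖ B) = (B ⊗ₖ A) * Fswap d := by
  ext p q
  rw [Fswap_mul, mul_Fswap]
  simp [Matrix.kroneckerMap_apply, mul_comm]

private noncomputable def Estd (d : ℕ) [NeZero d] : Matrix (Fin d × Fin d) (Fin d × Fin d) ℂ :=
  Matrix.single ((0 : Fin d), (0 : Fin d)) ((0 : Fin d), (0 : Fin d)) 1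

private lemma Fswap_mul_E : Fswap d * Estd d = Estd d := by
  ext p q
  rw [Fswap_mul]
  simp [Estd, Matrix.single, Prod.ext_iff, and_comm, and_assoc, and_left_comm]

private lemma E_mul_Fswap : Estd d * Fswap d = Estd d := by
  ext p q
  rw [mul_Fswap]
  simp [Estd, Matrix.single, Prod.ext_iff, and_comm, and_assoc, and_left_comm]

private noncomputable def Psym (d : ℕ) : Matrix (Fin d × Fin d) (Fin d × Fin d) ℂ :=
  (1 / 2 : ℂ) • (1 + Fswap d)

private lemma Psym_idem : Psym d * Psym d = Psym d := by
  unfold Psym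
  rw [Matrix.smul_mul, Matrix.mul_smul, smul_smul]
  rw [add_mul, mul_add, mul_add, Fswap_mul_Fswap]
  simp only [one_mul, mul_one]
  module

private lemma Psym_comm_kron (A : Matrix (Fin d) (Fin d) ℂ) :
    Psym d * (A ⊗ₖ A) = (A ⊗ₖ A) * Psym d := by
  unfold Psym
  rw [Matrix.smul_mul, Matrix.mul_smul, add_mul, mul_add, one_mul, mul_one, Fswap_kron]

private lemma Psym_mul_E : Psym d * Estd d = Estd d := by
  unfold Psym
  rw [Matrix.smul_mul, add_mul, one_mul, Fswap_mul_E]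
  module

private lemma E_mul_Psym : Estd d * Psym d = Estd d := by
  unfold Psym
  rw [Matrix.mul_smul, mul_add, mul_one, E_mul_Fswap]
  module

private lemma trace_mul_E (X : Matrix (Fin d × Fin d) (Fin d × Fin d) ℂ) :
    (X * Estd d).trace = X ((0 : Fin d), (0 : Fin d)) ((0 : Fin d), (0 : Fin d)) := by
  classical
  rw [Matrix.trace]
  rw [Finset.sum_eq_single ((0 : Fin d), (0 : Fin d))]
  · simp [Estd, Matrix.diag]
  · intro b _ hb
    simpa [Matrix.diag, Estd] using
      Matrix.mul_single_apply_of_ne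
        (1 : ℂ) ((0 : Fin d), (0 : Fin d)) ((0 : Fin d), (0 : Fin d)) b b hb X
  · simp

private lemma Psym_comm_of_comm {X Z : Matrix (Fin d × Fin d) (Fin d × Fin d) ℂ}
    (hX : Psym d * X = X * Psym d) (hZ : Psym d * Z = Z * Psym d) :
    Psym d * (X * Z) = X * Z * Psym d := by
  rw [← Matrix.mul_assoc, hX, Matrix.mul_assoc, hZ, ← Matrix.mul_assoc]

private lemma Psym_sandwich {X Z : Matrix (Fin d × Fin d) (Fin d × Fin d) ℂ}
    (hX : Psym d * X = X * Psym d) (hZ : Psym d * Z = Z * Psym d) :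
    Psym d * X * Psym d * Z * Psym d = Psym d * (X * Z) * Psym d := by
  calc Psym d * X * Psym d * Z * Psym d
      = X * (Psym d * Psym d) * (Z * Psym d) := by rw [hX]; simp only [Matrix.mul_assoc]
    _ = X * Psym d * (Z * Psym d) := by rw [Psym_idem]
    _ = X * (Psym d * Z) * Psym d := by simp only [Matrix.mul_assoc]
    _ = X * (Z * Psym d) * Psym d := by rw [hZ]
    _ = X * Z * Psym d := by simp only [Matrix.mul_assoc, Psym_idem]
    _ = Psym d * (X * Z) * Psym d := by
        rw [Psym_comm_of_comm hX hZ, Matrix.mul_assoc (X * Z), Psym_idem]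

theorem zulc_reduction_trace_with_A7 (d m : ℕ) [NeZero d]
    (Y : Fin 5 → Matrix (Fin d) (Fin d) ℤ)
    (O : Matrix (Fin m) (Fin d × Fin d) ℂ) :
    let F : Matrix (Fin d × Fin d) (Fin d × Fin d) ℂ :=
      fun p q => if p.1 = q.2 ∧ p.2 = q.1 then 1 else 0
    let P : Matrix (Fin d × Fin d) (Fin d × Fin d) ℂ := (1 / 2 : ℂ) • (1 + F)
    let Yc : Fin 5 → Matrix (Fin d) (Fin d) ℂ := fun i => (Y i).map Int.cast
    let E : Matrix (Fin d × Fin d) (Fin d × Fin d) ℂ :=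
      Matrix.single ((0 : Fin d), (0 : Fin d)) ((0 : Fin d), (0 : Fin d)) 1
    let A : Fin 5 → Matrix (Fin m ⊕ Unit) (Fin m ⊕ Unit) ℂ :=
      fun i => Matrix.fromBlocks (O * P * (Yc i ⊗ₖ Yc i) * P * Oᴴ) 0 0 1
    let A₇ : Matrix (Fin m ⊕ Unit) (Fin m ⊕ Unit) ℂ :=
      Matrix.fromBlocks (O * E * Oᴴ) 0 0 (-1)
    O * Oᴴ = 1 → Oᴴ * O = P →
    ∀ (L : ℕ) (w : Fin L → Fin 5),
      (((List.ofFn fun l => A (w l)).prod) * A₇).trace =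
        (((List.ofFn fun l => Yc (w l)).prod) 0 0) ^ 2 - 1 := by
  intro F P Yc E A A₇ hOO hOP L w
  have hF : F = Fswap d := rfl
  have hP : P = Psym d := rfl
  have hE : E = Estd d := rfl
  rw [hP] at hOP
  have key : ∀ (L : ℕ) (w : Fin L → Fin 5),
      (List.ofFn fun l => A (w l)).prod =
        Matrix.fromBlocks
          (O * Psym d *
            (((List.ofFn fun l => Yc (w l)).prod) ⊗ₖ ((List.ofFn fun l => Yc (w l)).prod)) *
            Psym d * Oᴴ) 0 0 1 := by
    intro L
    induction L with
    | zero =>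
      intro w
      simp only [List.ofFn_zero, List.prod_nil, Matrix.one_kronecker_one, Matrix.mul_one]
      have h1 : O * Psym d * Psym d * Oᴴ = 1 := by
        rw [Matrix.mul_assoc O, Psym_idem, ← hOP, Matrix.mul_assoc, Matrix.mul_assoc, hOO,
          Matrix.mul_one, hOO]
      rw [h1, Matrix.fromBlocks_one]
    | succ n ih =>
      intro w
      rw [List.ofFn_succ, List.ofFn_succ, List.prod_cons, List.prod_cons, ih]
      simp only [A, hP, hE]
      rw [Matrix.fromBlocks_multiply]
      simp only [Matrix.mul_zero, Matrix.zero_mul, add_zero, zero_add, mul_one]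
      have hX₀ := Psym_comm_kron (Yc (w 0))
      have hXr := Psym_comm_kron ((List.ofFn fun l => Yc (w l.succ)).prod)
      have hblk : O * Psym d * (Yc (w 0) ⊗ₖ Yc (w 0)) * Psym d * Oᴴ *
            (O * Psym d * (((List.ofFn fun l => Yc (w l.succ)).prod) ⊗ₖ
              ((List.ofFn fun l => Yc (w l.succ)).prod)) * Psym d * Oᴴ) =
          O * Psym d * ((Yc (w 0) * (List.ofFn fun l => Yc (w l.succ)).prod) ⊗ₖ
              (Yc (w 0) * (List.ofFn fun l => Yc (w l.succ)).prod)) * Psym d * Oᴴ := by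
        rw [Matrix.mul_kronecker_mul]
        calc O * Psym d * (Yc (w 0) ⊗ₖ Yc (w 0)) * Psym d * Oᴴ *
              (O * Psym d * (((List.ofFn fun l => Yc (w l.succ)).prod) ⊗ₖ
                ((List.ofFn fun l => Yc (w l.succ)).prod)) * Psym d * Oᴴ)
            = O * (Psym d * (Yc (w 0) ⊗ₖ Yc (w 0)) * (Psym d * (Oᴴ * O) * Psym d) *
                (((List.ofFn fun l => Yc (w l.succ)).prod) ⊗ₖ
                  ((List.ofFn fun l => Yc (w l.succ)).prod)) * Psym d) * Oᴴ := by
              simp only [Matrix.mul_assoc]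
          _ = O * (Psym d * (Yc (w 0) ⊗ₖ Yc (w 0)) * Psym d *
                (((List.ofFn fun l => Yc (w l.succ)).prod) ⊗ₖ
                  ((List.ofFn fun l => Yc (w l.succ)).prod)) * Psym d) * Oᴴ := by
              rw [hOP, Psym_idem, Psym_idem]
          _ = O * (Psym d * ((Yc (w 0) ⊗ₖ Yc (w 0)) *
                (((List.ofFn fun l => Yc (w l.succ)).prod) ⊗ₖ
                  ((List.ofFn fun l => Yc (w l.succ)).prod))) * Psym d) * Oᴴ := by
              rw [Psym_sandwich hX₀ hXr]
          _ = _ := by simp only [Matrix.mul_assoc]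
      rw [hblk]
  rw [key L w]
  simp only [A₇, hE]
  rw [Matrix.fromBlocks_multiply]
  simp only [Matrix.mul_zero, Matrix.zero_mul, add_zero, zero_add, one_mul]
  set Z := (List.ofFn fun l => Yc (w l)).prod with hZ
  have hZP : Psym d * (Z ⊗ₖ Z) = (Z ⊗ₖ Z) * Psym d := Psym_comm_kron _
  have hblock : O * Psym d * (Z ⊗ₖ Z) * Psym d * Oᴴ * (O * Estd d * Oᴴ)
      = O * ((Z ⊗ₖ Z) * Estd d) * Oᴴ := by
    calc O * Psym d * (Z ⊗ₖ Z) * Psym d * Oᴴ * (O * Estd d * Oᴴ)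
        = O * (Psym d * (Z ⊗ₖ Z) * (Psym d * (Oᴴ * O) * Estd d)) * Oᴴ := by
          simp only [Matrix.mul_assoc]
      _ = O * (Psym d * (Z ⊗ₖ Z) * Estd d) * Oᴴ := by
          rw [hOP, Psym_idem, Psym_mul_E]
      _ = O * ((Z ⊗ₖ Z) * (Psym d * Estd d)) * Oᴴ := by rw [hZP]; simp only [Matrix.mul_assoc]
      _ = _ := by rw [Psym_mul_E]
  rw [hblock]
  have htr : (O * ((Z ⊗ₖ Z) * Estd d) * Oᴴ).trace = (Z 0 0) ^ 2 := by
    rw [Matrix.trace_mul_cycle, hOP, ← Matrix.mul_assoc, hZP, Matrix.mul_assoc, Psym_mul_E,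
      trace_mul_E]
    simp [sq, Prod.mk_zero_zero]
  have htrace_blocks : ∀ (B : Matrix (Fin m) (Fin m) ℂ) (D : Matrix Unit Unit ℂ),
      (Matrix.fromBlocks B 0 0 D).trace = B.trace + D.trace := by
    intro B D
    simp [Matrix.trace, Fintype.sum_sum_type]
  rw [htrace_blocks, htr]
  simp [Matrix.trace, Matrix.one_apply]
  ring
end Aux
end

section
/- With the matrices Aᵢ (i = 1,…,7) defined as in the reduction from the ZULC problem, if a word i₁,…,i_L ∈ {1,…,5}^L contains no occurrence of 6 or 7, then tr(A_{i₁}⋯A_{i_L}) = (1/2)[(tr(Y_{i₁}⋯Y_{i_L}))² + tr((Y_{i₁}⋯Y_{i_L})²)] + 1. -/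
open Matrix Kronecker

lemma my_trace_fromBlocks {n o α : Type*} [Fintype n] [Fintype o] [AddCommMonoid α]
    (A : Matrix n n α) (B : Matrix n o α) (C : Matrix o n α) (D : Matrix o o α) :
    (Matrix.fromBlocks A B C D).trace = A.trace + D.trace := by
  simp [Matrix.trace, Matrix.diag, Fintype.sum_sum_type, Matrix.fromBlocks]

lemma my_blocks_prod {m α : Type*} [Fintype m] [DecidableEq m] [CommRing α]
    (l : List (Matrix m m α)) :
    (l.map fun X => Matrix.fromBlocks X 0 0 (1 : Matrix Unit Unit α)).prod
      = Matrix.fromBlocks l.prod 0 0 1 := by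
  induction l with
  | nil => simp [Matrix.fromBlocks_one]
  | cons h t ih => simp [ih, Matrix.fromBlocks_multiply]

section aux

variable {d : ℕ}

/-- the swap matrix -/
def myF (d : ℕ) : Matrix (Fin d × Fin d) (Fin d × Fin d) ℂ :=
  fun p q => if p.1 = q.2 ∧ p.2 = q.1 then 1 else 0

lemma myF_mul (M : Matrix (Fin d × Fin d) (Fin d × Fin d) ℂ) :
    myF d * M = fun p q => M (p.2, p.1) q := by
  ext p q
  rw [Matrix.mul_apply]
  rw [Finset.sum_eq_single (p.2, p.1)]
  · simp [myF]
  · intro b _ hb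
    have : ¬ (p.1 = b.2 ∧ p.2 = b.1) := by
      rintro ⟨h1, h2⟩; exact hb (by ext <;> simp [← h1, ← h2])
    simp [myF, this]
  · simp

lemma mul_myF (M : Matrix (Fin d × Fin d) (Fin d × Fin d) ℂ) :
    M * myF d = fun p q => M p (q.2, q.1) := by
  ext p q
  rw [Matrix.mul_apply]
  rw [Finset.sum_eq_single (q.2, q.1)]
  · simp [myF]
  · intro b _ hb
    have : ¬ (b.1 = q.2 ∧ b.2 = q.1) := by
      rintro ⟨h1, h2⟩; exact hb (by ext <;> simp [h1, h2])
    simp [myF, this]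
  · simp

lemma myF_mul_myF : myF d * myF d = 1 := by
  rw [myF_mul]
  ext p q
  by_cases h : p = q
  · subst h; simp [myF]
  · have h2 : ¬ (p.2 = q.2 ∧ p.1 = q.1) := by
      rintro ⟨h1, h2⟩; exact h (by ext <;> simp [h1, h2])
    simp [myF, h2, Matrix.one_apply_ne h]

lemma myF_comm_kron (G : Matrix (Fin d) (Fin d) ℂ) :
    myF d * (G ⊗ₖ G) = (G ⊗ₖ G) * myF d := by
  rw [myF_mul, mul_myF]
  ext p q
  simp [Matrix.kroneckerMap_apply, mul_comm]

lemma trace_kron_myF (G : Matrix (Fin d) (Fin d) ℂ) :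
    ((G ⊗ₖ G) * myF d).trace = (G * G).trace := by
  rw [mul_myF]
  simp only [Matrix.trace, Matrix.diag, Matrix.kroneckerMap_apply, Matrix.mul_apply]
  rw [Fintype.sum_prod_type]

lemma trace_myF : (myF d).trace = (d : ℂ) := by
  have h : ∀ p : Fin d × Fin d, ((if p.1 = p.2 ∧ p.2 = p.1 then (1:ℂ) else 0))
      = if p.1 = p.2 then 1 else 0 := by
    intro p; by_cases hp : p.1 = p.2 <;> simp [hp]
  simp only [Matrix.trace, Matrix.diag, myF, h]
  rw [Fintype.sum_prod_type]
  simp [Finset.sum_ite_eq]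

end aux

theorem zulc_reduction_trace_no_6_or_7 (d m : ℕ) [NeZero d]
    (Y : Fin 5 → Matrix (Fin d) (Fin d) ℤ)
    (O : Matrix (Fin m) (Fin d × Fin d) ℂ) :
    let F : Matrix (Fin d × Fin d) (Fin d × Fin d) ℂ :=
      fun p q => if p.1 = q.2 ∧ p.2 = q.1 then 1 else 0
    let P : Matrix (Fin d × Fin d) (Fin d × Fin d) ℂ := (1 / 2 : ℂ) • (1 + F)
    let Yc : Fin 5 → Matrix (Fin d) (Fin d) ℂ := fun i => (Y i).map Int.cast
    let A : Fin 5 → Matrix (Fin m ⊕ Unit) (Fin m ⊕ Unit) ℂ :=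
      fun i => Matrix.fromBlocks (O * P * (Yc i ⊗ₖ Yc i) * P * Oᴴ) 0 0 1
    O * Oᴴ = 1 → Oᴴ * O = P →
    ∀ (L : ℕ) (w : Fin L → Fin 5),
      ((List.ofFn fun l => A (w l)).prod).trace =
        (1 / 2 : ℂ) * ((((List.ofFn fun l => Yc (w l)).prod).trace) ^ 2 +
          (((List.ofFn fun l => Yc (w l)).prod) *
            ((List.ofFn fun l => Yc (w l)).prod)).trace) + 1 := by
  intro F P Yc A hO hP L w
  have hFdef : F = myF d := rfl
  have hFF : F * F = 1 := by rw [hFdef]; exact myF_mul_myF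
  -- idempotence of P
  have hPP : P * P = P := by
    show ((1 / 2 : ℂ) • (1 + F)) * ((1 / 2 : ℂ) • (1 + F)) = (1 / 2 : ℂ) • (1 + F)
    simp only [Matrix.smul_mul, Matrix.mul_smul, smul_smul, add_mul, mul_add,
      one_mul, mul_one, hFF]
    ext p q
    simp only [Matrix.smul_apply, Matrix.add_apply, smul_eq_mul]
    ring
  -- commutation of P with kronecker squares
  have hPK : ∀ G : Matrix (Fin d) (Fin d) ℂ, P * (G ⊗ₖ G) = (G ⊗ₖ G) * P := by
    intro G
    show ((1 / 2 : ℂ) • (1 + F)) * (G ⊗ₖ G) = (G ⊗ₖ G) * ((1 / 2 : ℂ) • (1 + F))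
    rw [Matrix.smul_mul, Matrix.mul_smul, add_mul, mul_add, one_mul, mul_one,
      hFdef, myF_comm_kron]
  -- assoc helpers
  have hA1 : ∀ X : Matrix (Fin d × Fin d) (Fin m) ℂ, Oᴴ * (O * X) = P * X := by
    intro X; rw [← Matrix.mul_assoc, hP]
  have hA2 : ∀ X : Matrix (Fin d × Fin d) (Fin m) ℂ, P * (P * X) = P * X := by
    intro X; rw [← Matrix.mul_assoc, hPP]
  have hA3 : ∀ (G : Matrix (Fin d) (Fin d) ℂ) (X : Matrix (Fin d × Fin d) (Fin m) ℂ),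
      P * ((G ⊗ₖ G) * X) = (G ⊗ₖ G) * (P * X) := by
    intro G X; rw [← Matrix.mul_assoc, hPK, Matrix.mul_assoc]
  -- key product identity for nonempty words
  have key : ∀ (n : ℕ) (v : Fin (n + 1) → Fin 5),
      (List.ofFn fun l => O * P * (Yc (v l) ⊗ₖ Yc (v l)) * P * Oᴴ).prod
        = O * (P * ((((List.ofFn fun l => Yc (v l)).prod) ⊗ₖ
            ((List.ofFn fun l => Yc (v l)).prod)) * (P * Oᴴ))) := by
    intro n
    induction n with
    | zero =>
      intro v
      simp only [List.ofFn_succ, List.ofFn_zero, List.prod_cons, List.prod_nil,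
        mul_one, Matrix.mul_assoc]
    | succ n ih =>
      intro v
      rw [List.ofFn_succ, List.prod_cons, ih (fun l => v l.succ)]
      conv_rhs => rw [List.ofFn_succ, List.prod_cons]
      rw [Matrix.mul_kronecker_mul]
      simp only [Matrix.mul_assoc]
      simp only [hA1, hA2, hA3]
  -- m as a complex number equals trace P
  have hm : (Matrix.trace (1 : Matrix (Fin m) (Fin m) ℂ)) = P.trace := by
    rw [← hO, Matrix.trace_mul_comm, hP]
  -- trace of (G ⊗ G) * P
  have htr : ∀ G : Matrix (Fin d) (Fin d) ℂ,
      (((G ⊗ₖ G) : Matrix (Fin d × Fin d) (Fin d × Fin d) ℂ) * P).trace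
        = (1 / 2 : ℂ) * ((G.trace) ^ 2 + (G * G).trace) := by
    intro G
    show ((G ⊗ₖ G) * ((1 / 2 : ℂ) • (1 + F))).trace = _
    rw [Matrix.mul_smul, mul_add, mul_one, Matrix.trace_smul, Matrix.trace_add,
      hFdef, trace_kron_myF, Matrix.trace_kronecker]
    rw [smul_eq_mul]
    ring
  -- reduce block trace to the kronecker trace
  have main : ((List.ofFn fun l => O * P * (Yc (w l) ⊗ₖ Yc (w l)) * P * Oᴴ).prod).trace
      = ((((List.ofFn fun l => Yc (w l)).prod) ⊗ₖ ((List.ofFn fun l => Yc (w l)).prod)) * P).trace := by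
    cases L with
    | zero =>
      simp only [List.ofFn_zero, List.prod_nil]
      rw [Matrix.one_kronecker_one, one_mul, hm]
    | succ n =>
      rw [key n w]
      set G := (List.ofFn fun l => Yc (w l)).prod with hG
      have e1 : O * (P * ((G ⊗ₖ G) * (P * Oᴴ))) = O * ((P * ((G ⊗ₖ G) * P)) * Oᴴ) := by
        simp only [Matrix.mul_assoc]
      have e2 : P * ((G ⊗ₖ G) * P) * P = (G ⊗ₖ G) * P := by
        rw [Matrix.mul_assoc P ((G ⊗ₖ G) * P) P, Matrix.mul_assoc (G ⊗ₖ G) P P, hPP,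
          ← Matrix.mul_assoc P (G ⊗ₖ G) P, hPK, Matrix.mul_assoc (G ⊗ₖ G) P P, hPP]
      rw [e1, Matrix.trace_mul_comm, Matrix.mul_assoc, hP, e2]
  -- assemble
  have hAmap : (List.ofFn fun l => A (w l))
      = (List.ofFn fun l => O * P * (Yc (w l) ⊗ₖ Yc (w l)) * P * Oᴴ).map
          (fun X => Matrix.fromBlocks X 0 0 (1 : Matrix Unit Unit ℂ)) := by
    rw [List.map_ofFn]
    rfl
  rw [hAmap, my_blocks_prod, my_trace_fromBlocks, main, htr]
  simp
end

section
/- With the Aᵢ as in the ZULC reduction, if a word i₁,…,i_L contains exactly one occurrence of index 6 (and no 7), then tr(A_{i₁}⋯A_{i_L}) = (⟨0|Y_{j₁}⋯Y_{j_{L−1}}|0⟩)² + 1 > 0, where j₁,…,j_{L−1} is the word with the 6 cyclically moved to the end and removed. -/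
open Matrix Kronecker ComplexOrder

set_option linter.unusedSectionVars false

section ZulcAux

variable {d m : ℕ} [NeZero d]

private noncomputable def Fm (d : ℕ) : Matrix (Fin d × Fin d) (Fin d × Fin d) ℂ :=
  fun p q => if p.1 = q.2 ∧ p.2 = q.1 then 1 else 0

private lemma Fm_apply (p q : Fin d × Fin d) :
    Fm d p q = if q = (p.2, p.1) then 1 else 0 := by
  simp [Fm, Prod.ext_iff, eq_comm, and_comm]

private lemma Fm_mul_apply (M : Matrix (Fin d × Fin d) (Fin d × Fin d) ℂ) (p q : Fin d × Fin d) :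
    (Fm d * M) p q = M (p.2, p.1) q := by
  simp [Matrix.mul_apply, Fm_apply]

private lemma mul_Fm_apply (M : Matrix (Fin d × Fin d) (Fin d × Fin d) ℂ) (p q : Fin d × Fin d) :
    (M * Fm d) p q = M p (q.2, q.1) := by
  have h : ∀ x : Fin d × Fin d, (if q = (x.2, x.1) then (1:ℂ) else 0)
      = if x = (q.2, q.1) then 1 else 0 := by
    intro x; simp [Prod.ext_iff, eq_comm, and_comm]
  simp [Matrix.mul_apply, Fm_apply, h, mul_ite]

private lemma Fm_mul_Fm : Fm d * Fm d = 1 := by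
  ext p q
  rw [Fm_mul_apply, Fm_apply, Matrix.one_apply]
  simp [Prod.ext_iff, eq_comm, and_comm]

private lemma Fm_comm_kron (M : Matrix (Fin d) (Fin d) ℂ) :
    Fm d * (M ⊗ₖ M) = (M ⊗ₖ M) * Fm d := by
  ext p q
  rw [Fm_mul_apply, mul_Fm_apply]
  simp [Matrix.kroneckerMap_apply, mul_comm]

private noncomputable def Em (d : ℕ) [NeZero d] : Matrix (Fin d × Fin d) (Fin d × Fin d) ℂ :=
  Matrix.single ((0 : Fin d), (0 : Fin d)) ((0 : Fin d), (0 : Fin d)) 1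

private lemma Fm_mul_Em : Fm d * Em d = Em d := by
  ext p q
  rw [Fm_mul_apply]
  simp [Em, Matrix.single, Prod.ext_iff, and_comm]

private noncomputable def Pm (d : ℕ) : Matrix (Fin d × Fin d) (Fin d × Fin d) ℂ :=
  (1 / 2 : ℂ) • (1 + Fm d)

private lemma Pm_mul_Pm : Pm d * Pm d = Pm d := by
  simp only [Pm, Matrix.smul_mul, Matrix.mul_smul, smul_smul]
  rw [add_mul, mul_add, mul_add, Fm_mul_Fm]
  simp only [one_mul, mul_one]
  rw [show (1/2 : ℂ) * (1/2) = 1/4 by norm_num]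
  rw [show (1 : Matrix (Fin d × Fin d) (Fin d × Fin d) ℂ) + Fm d + (Fm d + 1)
      = (2:ℂ) • (1 + Fm d) by rw [two_smul]; abel]
  rw [smul_smul]; norm_num

private lemma Pm_comm_kron (M : Matrix (Fin d) (Fin d) ℂ) :
    Pm d * (M ⊗ₖ M) = (M ⊗ₖ M) * Pm d := by
  simp only [Pm, Matrix.smul_mul, Matrix.mul_smul, add_mul, mul_add, one_mul, mul_one,
    Fm_comm_kron]

private lemma Pm_mul_Em : Pm d * Em d = Em d := by
  simp only [Pm, Matrix.smul_mul, add_mul, one_mul, Fm_mul_Em]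
  rw [show Em d + Em d = (2:ℂ) • Em d by rw [two_smul], smul_smul]
  norm_num

private lemma trace_fromBlocks_diag (A : Matrix (Fin m) (Fin m) ℂ)
    (D : Matrix Unit Unit ℂ) :
    (Matrix.fromBlocks A 0 0 D).trace = A.trace + D.trace := by
  simp [Matrix.trace, Fintype.sum_sum_type, Matrix.fromBlocks, Matrix.diag]

private lemma trace_mul_Em (M : Matrix (Fin d × Fin d) (Fin d × Fin d) ℂ) :
    (M * Em d).trace = M (0, 0) (0, 0) := by
  rw [Matrix.trace, Finset.sum_eq_single ((0, 0) : Fin d × Fin d)]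
  · simp [Matrix.diag, Em]
  · intro b _ hb
    have hb' : ¬((0 : Fin d × Fin d) = b) := fun h => hb (by rw [← h]; rfl)
    simp [Matrix.diag, Em, Matrix.mul_apply, Matrix.single, hb', hb.symm]
  · simp

end ZulcAux

theorem zulc_reduction_trace_single_6 (d m : ℕ) [NeZero d]
    (Y : Fin 5 → Matrix (Fin d) (Fin d) ℤ)
    (O : Matrix (Fin m) (Fin d × Fin d) ℂ) :
    let F : Matrix (Fin d × Fin d) (Fin d × Fin d) ℂ :=
      fun p q => if p.1 = q.2 ∧ p.2 = q.1 then 1 else 0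
    let P : Matrix (Fin d × Fin d) (Fin d × Fin d) ℂ := (1 / 2 : ℂ) • (1 + F)
    let Yc : Fin 5 → Matrix (Fin d) (Fin d) ℂ := fun i => (Y i).map Int.cast
    let E : Matrix (Fin d × Fin d) (Fin d × Fin d) ℂ :=
      Matrix.single ((0 : Fin d), (0 : Fin d)) ((0 : Fin d), (0 : Fin d)) 1
    let A : Fin 5 → Matrix (Fin m ⊕ Unit) (Fin m ⊕ Unit) ℂ :=
      fun i => Matrix.fromBlocks (O * P * (Yc i ⊗ₖ Yc i) * P * Oᴴ) 0 0 1
    let A₆ : Matrix (Fin m ⊕ Unit) (Fin m ⊕ Unit) ℂ :=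
      Matrix.fromBlocks (O * E * Oᴴ) 0 0 1
    O * Oᴴ = 1 → Oᴴ * O = P →
    -- a word containing exactly one occurrence of 6 (and no 7): by cyclicity
    -- of the trace it can be taken to be (j₁,…,j_{L-1},6) with jₗ ∈ {1,…,5}
    ∀ (L : ℕ) (j : Fin L → Fin 5),
      (((List.ofFn fun l => A (j l)).prod) * A₆).trace =
        (((List.ofFn fun l => Yc (j l)).prod) 0 0) ^ 2 + 1 ∧
      0 < (((List.ofFn fun l => A (j l)).prod) * A₆).trace := by
  intro F P Yc E A A₆ hO hP L j
  have hPP : P = Pm d := rfl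
  have hE : E = Em d := rfl
  -- key block identity
  have key : ∀ (L : ℕ) (j : Fin L → Fin 5),
      ((List.ofFn fun l => A (j l)).prod) * A₆ =
        Matrix.fromBlocks
          (O * (Pm d * (((List.ofFn fun l => Yc (j l)).prod) ⊗ₖ
            ((List.ofFn fun l => Yc (j l)).prod)) * Em d) * Oᴴ) 0 0 1 := by
    intro L
    induction L with
    | zero =>
        intro j
        simp only [List.ofFn_zero, List.prod_nil, one_mul, A₆, hE, hPP]
        congr 1
        rw [Matrix.one_kronecker_one, mul_one, Pm_mul_Em, Matrix.mul_assoc]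
    | succ n ih =>
        intro j
        rw [List.ofFn_succ, List.prod_cons, List.ofFn_succ, List.prod_cons,
          Matrix.mul_assoc, ih (fun l => j l.succ)]
        show Matrix.fromBlocks (O * P * (Yc (j 0) ⊗ₖ Yc (j 0)) * P * Oᴴ) 0 0 1 * _ = _
        rw [Matrix.fromBlocks_multiply]
        congr 1 <;> try simp
        set W := (List.ofFn fun l => Yc (j l.succ)).prod
        rw [hPP]
        have h1 : ∀ X : Matrix (Fin d × Fin d) (Fin d × Fin d) ℂ,
            Oᴴ * (O * X) = Pm d * X := by
          intro X; rw [← Matrix.mul_assoc, hP, hPP]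
        have h2 : ∀ X : Matrix (Fin d × Fin d) (Fin d × Fin d) ℂ,
            Pm d * (Pm d * X) = Pm d * X := by
          intro X; rw [← Matrix.mul_assoc, Pm_mul_Pm]
        have h3 : ∀ X : Matrix (Fin d × Fin d) (Fin d × Fin d) ℂ,
            Pm d * ((Yc (j 0) ⊗ₖ Yc (j 0)) * X)
              = (Yc (j 0) ⊗ₖ Yc (j 0)) * (Pm d * X) := by
          intro X; rw [← Matrix.mul_assoc, Pm_comm_kron, Matrix.mul_assoc]
        have h1' : ∀ X : Matrix (Fin d × Fin d) (Fin m) ℂ,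
            Oᴴ * (O * X) = Pm d * X := by
          intro X; rw [← Matrix.mul_assoc, hP, hPP]
        have h2' : ∀ X : Matrix (Fin d × Fin d) (Fin m) ℂ,
            Pm d * (Pm d * X) = Pm d * X := by
          intro X; rw [← Matrix.mul_assoc, Pm_mul_Pm]
        have h3' : ∀ X : Matrix (Fin d × Fin d) (Fin m) ℂ,
            Pm d * ((Yc (j 0) ⊗ₖ Yc (j 0)) * X)
              = (Yc (j 0) ⊗ₖ Yc (j 0)) * (Pm d * X) := by
          intro X; rw [← Matrix.mul_assoc, Pm_comm_kron, Matrix.mul_assoc]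
        simp only [Matrix.mul_assoc]
        rw [h1', h2', h2', h3', h2', ← h3', ← Matrix.mul_assoc (Yc (j 0) ⊗ₖ Yc (j 0)) (W ⊗ₖ W),
          ← Matrix.mul_kronecker_mul]
  have heq : (((List.ofFn fun l => A (j l)).prod) * A₆).trace =
      (((List.ofFn fun l => Yc (j l)).prod) 0 0) ^ 2 + 1 := by
    rw [key L j, trace_fromBlocks_diag]
    have h1 : (Matrix.trace (1 : Matrix Unit Unit ℂ)) = 1 := by
      simp [Matrix.trace]
    rw [h1]
    congr 1
    set W := (List.ofFn fun l => Yc (j l)).prod with hW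
    rw [show O * (Pm d * (W ⊗ₖ W) * Em d) * Oᴴ
        = O * Pm d * ((W ⊗ₖ W) * Em d) * Oᴴ by simp only [Matrix.mul_assoc]]
    rw [Matrix.trace_mul_cycle, ← Matrix.mul_assoc, ← Matrix.mul_assoc, hP, hPP,
      Pm_mul_Pm]
    rw [Matrix.mul_assoc, show Pm d * ((W ⊗ₖ W) * Em d) = W ⊗ₖ W * (Pm d * Em d) by
      rw [← Matrix.mul_assoc, ← Matrix.mul_assoc, Pm_comm_kron, Matrix.mul_assoc]]
    rw [Pm_mul_Em, trace_mul_Em]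
    simp [Matrix.kroneckerMap_apply, sq]
  refine ⟨heq, ?_⟩
  rw [heq]
  -- entries are integers
  have hcast : (List.ofFn fun l => Yc (j l)).prod
      = ((Int.castRingHom ℂ).mapMatrix : Matrix (Fin d) (Fin d) ℤ →+* _)
        ((List.ofFn fun l => Y (j l)).prod) := by
    rw [map_list_prod, List.map_ofFn]
    rfl
  set n : ℤ := ((List.ofFn fun l => Y (j l)).prod) 0 0 with hn
  have h2 : (((List.ofFn fun l => Yc (j l)).prod) 0 0) = (n : ℂ) := by
    rw [hcast]; rfl
  rw [h2, show ((n : ℂ)^2 + 1) = ((n^2 + 1 : ℤ) : ℂ) by push_cast; ring]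
  have hpos : (0:ℤ) < n^2 + 1 := by nlinarith [sq_nonneg n]
  exact_mod_cast hpos
end
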